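/- Fix β real with 0 < |β| < 1, γ = (1−β²)^{−1/2}, x₁, x₂ ∈ ℝ. Let R, Rₜ be the 2-kink profile with parameters (β, x₁, x₂), and let Q̃(x) = 4·arctan(e^{γ(x+x₁+x₂)}) with Q̃ₜ(x) = 2βγ·sech(γ(x+x₁+x₂)) (the real kink profile of speed −β and shift x₁+x₂). Set a₃ = −a(β) = −√((1+β)/(1−β)). Then: (1) lim_{x→+∞} cos((R(x)+Q̃(x))/2) = 1, lim_{x→−∞} cos((R(x)+Q̃(x))/2) = −1, lim_{x→+∞} cos((R(x)−Q̃(x))/2) = 1, lim_{x→−∞} cos((R(x)−Q̃(x))/2) = −1; (2) for all x ∈ ℝ: R′(x) − Q̃ₜ(x) = (1/a₃)·sin((R(x)+Q̃(x))/2) + a₃·sin((R(x)−Q̃(x))/2) and Rₜ(x) − Q̃′(x) = (1/a₃)·sin((R(x)+Q̃(x))/2) − a₃·sin((R(x)−Q̃(x))/2); i.e. (R, Rₜ) is a Bäcklund transform of (Q̃, Q̃ₜ) with parameter −a(β). -/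

import Mathlib

open Filter Topology

lemma sin_two_arctan' (x : ℝ) : Real.sin (2 * Real.arctan x) = 2*x/(1+x^2) := by
  have h0 : (0:ℝ) < 1 + x^2 := by positivity
  have hs : Real.sqrt (1+x^2) * Real.sqrt (1+x^2) = 1+x^2 := Real.mul_self_sqrt h0.le
  have hne : Real.sqrt (1+x^2) ≠ 0 := by positivity
  rw [Real.sin_two_mul, Real.sin_arctan, Real.cos_arctan]
  field_simp
  rw [Real.sq_sqrt h0.le]

lemma cos_two_arctan' (x : ℝ) : Real.cos (2 * Real.arctan x) = (1-x^2)/(1+x^2) := by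
  have h0 : (0:ℝ) < 1 + x^2 := by positivity
  have hs : Real.sqrt (1+x^2) * Real.sqrt (1+x^2) = 1+x^2 := Real.mul_self_sqrt h0.le
  have hne : Real.sqrt (1+x^2) ≠ 0 := by positivity
  rw [Real.cos_two_mul, Real.cos_arctan]
  field_simp
  nlinarith [hs]

lemma tendsto_sinh_atTop' : Tendsto Real.sinh atTop atTop := by
  apply tendsto_atTop_mono' atTop ?_ tendsto_id
  filter_upwards [eventually_ge_atTop 0] with x hx
  exact Real.self_le_sinh_iff.mpr hx

lemma tendsto_sinh_atBot' : Tendsto Real.sinh atBot atBot := by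
  apply tendsto_atBot_mono' atBot ?_ tendsto_id
  filter_upwards [eventually_le_atBot 0] with x hx
  have := Real.self_le_sinh_iff.mpr (neg_nonneg.mpr hx)
  simp only [Real.sinh_neg] at this
  simp only [id_eq]
  linarith

lemma cos_comb (f g : ℝ → ℝ) (l : Filter ℝ) (LA LB c : ℝ)
    (hA : Tendsto f l (nhds LA)) (hB : Tendsto g l (nhds LB))
    (hc : Real.cos (2*LA + 2*LB) = c) :
    Tendsto (fun x => Real.cos (2 * f x + 2 * g x)) l (nhds c) := by
  have h := (Real.continuous_cos.tendsto (2*LA + 2*LB)).comp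
    ((hA.const_mul 2).add (hB.const_mul 2))
  rw [hc] at h
  exact h

lemma cos_comb_sub (f g : ℝ → ℝ) (l : Filter ℝ) (LA LB c : ℝ)
    (hA : Tendsto f l (nhds LA)) (hB : Tendsto g l (nhds LB))
    (hc : Real.cos (2*LA - 2*LB) = c) :
    Tendsto (fun x => Real.cos (2 * f x - 2 * g x)) l (nhds c) := by
  have h := (Real.continuous_cos.tendsto (2*LA - 2*LB)).comp
    ((hA.const_mul 2).sub (hB.const_mul 2))
  rw [hc] at h
  exact h


set_option maxHeartbeats 2000000 in
/-- **The 2-kink as a Bäcklund transform of a real kink (Corollary 4.7).**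
For `0 < |β| < 1`, `γ = (1−β²)^{-1/2}`, the 2-kink profile `(R, Rₜ)` and the real kink
profile `Q̃` of speed `−β` and shift `x₁+x₂` satisfy `cos((R±Q̃)/2) → 1` at `+∞` and
`→ −1` at `−∞`, and the Bäcklund equations with parameter `a₃ = −√((1+β)/(1−β))`. -/
theorem two_kink_backlund_of_kink (β x₁ x₂ : ℝ) (hβ0 : 0 < |β|) (hβ1 : |β| < 1)
    (γ : ℝ) (hγ : γ = (1 - β ^ 2) ^ (-(1 / 2 : ℝ)))
    (R Rt : ℝ → ℝ)
    (hR : ∀ x : ℝ, R x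
      = 4 * Real.arctan (β * Real.sinh (γ * (x + x₂)) / Real.cosh (γ * x₁)))
    (hRt : ∀ x : ℝ, Rt x
      = -4 * β ^ 2 * γ * Real.sinh (γ * (x + x₂)) * Real.sinh (γ * x₁)
          / ((Real.cosh (γ * x₁)) ^ 2 + β ^ 2 * (Real.sinh (γ * (x + x₂))) ^ 2))
    (Q Qt : ℝ → ℝ)
    (hQ : ∀ x : ℝ, Q x = 4 * Real.arctan (Real.exp (γ * (x + x₁ + x₂))))
    (hQt : ∀ x : ℝ, Qt x = 2 * β * γ * (Real.cosh (γ * (x + x₁ + x₂)))⁻¹)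
    (a₃ : ℝ) (ha₃ : a₃ = -Real.sqrt ((1 + β) / (1 - β))) :
    -- (1) limits at ±∞
    (Tendsto (fun x : ℝ => Real.cos ((R x + Q x) / 2)) atTop (nhds 1)) ∧
    (Tendsto (fun x : ℝ => Real.cos ((R x + Q x) / 2)) atBot (nhds (-1))) ∧
    (Tendsto (fun x : ℝ => Real.cos ((R x - Q x) / 2)) atTop (nhds 1)) ∧
    (Tendsto (fun x : ℝ => Real.cos ((R x - Q x) / 2)) atBot (nhds (-1))) ∧
    -- (2) Bäcklund equations with parameter a₃ = −a(β)
    (∀ x : ℝ, deriv R x - Qt x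
      = (1 / a₃) * Real.sin ((R x + Q x) / 2) + a₃ * Real.sin ((R x - Q x) / 2)) ∧
    (∀ x : ℝ, Rt x - deriv Q x
      = (1 / a₃) * Real.sin ((R x + Q x) / 2) - a₃ * Real.sin ((R x - Q x) / 2)) := by
  -- basic facts
  have hβ2 : β^2 < 1 := by have := sq_abs β; nlinarith [hβ0, hβ1]
  have h1β : (0:ℝ) < 1 - β^2 := by linarith
  have hb1 : -1 < β := by nlinarith [neg_abs_le β, le_abs_self β]
  have hb2 : β < 1 := by nlinarith [neg_abs_le β, le_abs_self β]
  have hβne : β ≠ 0 := by intro h; rw [h] at hβ0; simp at hβ0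
  have hγpos : 0 < γ := by rw [hγ]; positivity
  have hγ2 : γ^2 * (1-β^2) = 1 := by
    have h : γ^2 = (1-β^2)⁻¹ := by
      rw [hγ, ← Real.rpow_natCast _ 2, ← Real.rpow_mul h1β.le]
      norm_num
      rw [Real.rpow_neg_one]
    rw [h]; field_simp
  have ha : a₃ = -((1+β)*γ) := by
    have hpos : 0 < (1+β)*γ := mul_pos (by linarith) hγpos
    have h1 : (1:ℝ) - β ≠ 0 := by linarith
    have h : (1+β)/(1-β) = ((1+β)*γ)^2 := by
      field_simp
      nlinarith [hγ2]
    rw [ha₃, h, Real.sqrt_sq hpos.le]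
  have hinv : a₃⁻¹ = (β-1)*γ := by
    have h : a₃ * ((β-1)*γ) = 1 := by rw [ha]; nlinarith [hγ2]
    exact inv_eq_of_mul_eq_one_right h
  have hc₁pos : 0 < Real.cosh (γ*x₁) := Real.cosh_pos _
  -- limits part --
  -- the inner argument maps
  have hargTop : Tendsto (fun x : ℝ => γ*(x+x₂)) atTop atTop :=
    ((tendsto_atTop_add_const_right atTop x₂ tendsto_id).const_mul_atTop hγpos)
  have hargBot : Tendsto (fun x : ℝ => γ*(x+x₂)) atBot atBot :=
    ((tendsto_atBot_add_const_right atBot x₂ tendsto_id).const_mul_atBot hγpos)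
  have hargTop' : Tendsto (fun x : ℝ => γ*(x+x₁+x₂)) atTop atTop :=
    ((tendsto_atTop_add_const_right atTop x₂
      (tendsto_atTop_add_const_right atTop x₁ tendsto_id)).const_mul_atTop hγpos)
  have hargBot' : Tendsto (fun x : ℝ => γ*(x+x₁+x₂)) atBot atBot :=
    ((tendsto_atBot_add_const_right atBot x₂
      (tendsto_atBot_add_const_right atBot x₁ tendsto_id)).const_mul_atBot hγpos)
  have hsinhTop : Tendsto (fun x : ℝ => Real.sinh (γ*(x+x₂))) atTop atTop :=
    tendsto_sinh_atTop'.comp hargTop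
  have hsinhBot : Tendsto (fun x : ℝ => Real.sinh (γ*(x+x₂))) atBot atBot :=
    tendsto_sinh_atBot'.comp hargBot
  -- arctan of U
  obtain ⟨LA, hAtop, hAbot, hcLA, hsLA⟩ :
      ∃ LA : ℝ, Tendsto (fun x => Real.arctan
          (β * Real.sinh (γ*(x+x₂)) / Real.cosh (γ*x₁))) atTop (nhds LA) ∧
        Tendsto (fun x => Real.arctan
          (β * Real.sinh (γ*(x+x₂)) / Real.cosh (γ*x₁))) atBot (nhds (-LA)) ∧
        Real.cos (2*LA) = -1 ∧ Real.sin (2*LA) = 0 := by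
    rcases lt_or_gt_of_ne hβne with hneg | hpos
    · refine ⟨-(Real.pi/2), ?_, ?_, ?_, ?_⟩
      · have hUbot : Tendsto (fun x : ℝ => β * Real.sinh (γ*(x+x₂)) / Real.cosh (γ*x₁))
            atTop atBot :=
          (hsinhTop.const_mul_atTop_of_neg hneg).atBot_div_const hc₁pos
        exact (Real.tendsto_arctan_atBot.mono_right nhdsWithin_le_nhds).comp hUbot
      · have hUtop : Tendsto (fun x : ℝ => β * Real.sinh (γ*(x+x₂)) / Real.cosh (γ*x₁))
            atBot atTop :=
          (hsinhBot.const_mul_atBot_of_neg hneg).atTop_div_const hc₁pos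
        have h := (Real.tendsto_arctan_atTop.mono_right nhdsWithin_le_nhds).comp hUtop
        simpa [Function.comp_def] using h
      · rw [show 2*(-(Real.pi/2)) = -Real.pi by ring, Real.cos_neg, Real.cos_pi]
      · rw [show 2*(-(Real.pi/2)) = -Real.pi by ring, Real.sin_neg, Real.sin_pi, neg_zero]
    · refine ⟨Real.pi/2, ?_, ?_, ?_, ?_⟩
      · have hUtop : Tendsto (fun x : ℝ => β * Real.sinh (γ*(x+x₂)) / Real.cosh (γ*x₁))
            atTop atTop :=
          (hsinhTop.const_mul_atTop hpos).atTop_div_const hc₁pos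
        exact (Real.tendsto_arctan_atTop.mono_right nhdsWithin_le_nhds).comp hUtop
      · have hUbot : Tendsto (fun x : ℝ => β * Real.sinh (γ*(x+x₂)) / Real.cosh (γ*x₁))
            atBot atBot :=
          (hsinhBot.const_mul_atBot hpos).atBot_div_const hc₁pos
        exact (Real.tendsto_arctan_atBot.mono_right nhdsWithin_le_nhds).comp hUbot
      · rw [show 2*(Real.pi/2) = Real.pi by ring, Real.cos_pi]
      · rw [show 2*(Real.pi/2) = Real.pi by ring, Real.sin_pi]
  -- arctan of V
  have hBtop : Tendsto (fun x => Real.arctan (Real.exp (γ*(x+x₁+x₂)))) atTop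
      (nhds (Real.pi/2)) :=
    (Real.tendsto_arctan_atTop.mono_right nhdsWithin_le_nhds).comp
      (Real.tendsto_exp_atTop.comp hargTop')
  have hBbot : Tendsto (fun x => Real.arctan (Real.exp (γ*(x+x₁+x₂)))) atBot (nhds 0) := by
    have h := (Real.continuous_arctan.tendsto 0).comp (Real.tendsto_exp_atBot.comp hargBot')
    simpa [Real.arctan_zero, Function.comp_def] using h
  -- function rewrites
  have hfunP : (fun x : ℝ => Real.cos ((R x + Q x)/2))
      = fun x => Real.cos (2 * Real.arctan (β * Real.sinh (γ*(x+x₂)) / Real.cosh (γ*x₁))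
          + 2 * Real.arctan (Real.exp (γ*(x+x₁+x₂)))) := by
    funext x
    have h42 : ∀ a b : ℝ, (4*a + 4*b)/2 = 2*a + 2*b := fun a b => by ring
    rw [hR, hQ, h42]
  have hfunM : (fun x : ℝ => Real.cos ((R x - Q x)/2))
      = fun x => Real.cos (2 * Real.arctan (β * Real.sinh (γ*(x+x₂)) / Real.cosh (γ*x₁))
          - 2 * Real.arctan (Real.exp (γ*(x+x₁+x₂)))) := by
    funext x
    have h42 : ∀ a b : ℝ, (4*a - 4*b)/2 = 2*a - 2*b := fun a b => by ring
    rw [hR, hQ, h42]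
  refine ⟨?_, ?_, ?_, ?_, ?_, ?_⟩
  · rw [hfunP]
    refine cos_comb _ _ _ _ _ _ hAtop hBtop ?_
    rw [Real.cos_add, hcLA, hsLA, show 2*(Real.pi/2) = Real.pi by ring,
      Real.cos_pi, Real.sin_pi]
    ring
  · rw [hfunP]
    refine cos_comb _ _ _ _ _ _ hAbot hBbot ?_
    rw [show 2*(-LA) + 2*0 = -(2*LA) by ring, Real.cos_neg, hcLA]
  · rw [hfunM]
    refine cos_comb_sub _ _ _ _ _ _ hAtop hBtop ?_
    rw [Real.cos_sub, hcLA, hsLA, show 2*(Real.pi/2) = Real.pi by ring,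
      Real.cos_pi, Real.sin_pi]
    ring
  · rw [hfunM]
    refine cos_comb_sub _ _ _ _ _ _ hAbot hBbot ?_
    rw [show 2*(-LA) - 2*0 = -(2*LA) by ring, Real.cos_neg, hcLA]
  -- Bäcklund equation 1
  · intro x
    have harg : HasDerivAt (fun y : ℝ => γ*(y+x₂)) γ x := by
      simpa using ((hasDerivAt_id x).add_const x₂).const_mul γ
    have hsinh : HasDerivAt (fun y : ℝ => Real.sinh (γ*(y+x₂)))
        (Real.cosh (γ*(x+x₂)) * γ) x := (Real.hasDerivAt_sinh _).comp x harg
    have hu : HasDerivAt (fun y : ℝ => β * Real.sinh (γ*(y+x₂)) / Real.cosh (γ*x₁))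
        (β * (Real.cosh (γ*(x+x₂)) * γ) / Real.cosh (γ*x₁)) x :=
      (hsinh.const_mul β).div_const _
    have hRarc : HasDerivAt
        (fun y : ℝ => 4 * Real.arctan (β * Real.sinh (γ*(y+x₂)) / Real.cosh (γ*x₁)))
        (4 * (1/(1+(β * Real.sinh (γ*(x+x₂)) / Real.cosh (γ*x₁))^2)
          * (β * (Real.cosh (γ*(x+x₂)) * γ) / Real.cosh (γ*x₁)))) x :=
      ((Real.hasDerivAt_arctan _).comp x hu).const_mul 4
    have hdR : deriv R x = 4 * (1/(1+(β * Real.sinh (γ*(x+x₂)) / Real.cosh (γ*x₁))^2)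
          * (β * (Real.cosh (γ*(x+x₂)) * γ) / Real.cosh (γ*x₁))) := by
      rw [funext hR]; exact hRarc.deriv
    rw [hdR, hQt x, hR x, hQ x,
      show ∀ a b : ℝ, (4*a + 4*b)/2 = 2*a + 2*b from fun a b => by ring,
      show ∀ a b : ℝ, (4*a - 4*b)/2 = 2*a - 2*b from fun a b => by ring,
      Real.sin_add, Real.sin_sub, sin_two_arctan', sin_two_arctan',
      cos_two_arctan', cos_two_arctan', one_div a₃, hinv, ha,
      show γ*(x+x₁+x₂) = γ*x₁ + γ*(x+x₂) from by ring]
    simp only [Real.cosh_eq, Real.sinh_eq, Real.exp_add, Real.exp_neg]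
    set E := Real.exp (γ*x₁) with hE
    set p := Real.exp (γ*(x+x₂)) with hp
    have hEpos : 0 < E := Real.exp_pos _
    have hppos : 0 < p := Real.exp_pos _
    have hEne := hEpos.ne'
    have hpne := hppos.ne'
    have h1 : (0:ℝ) < E + E⁻¹ := by positivity
    have h2 : (0:ℝ) < 1 + (β*((p-p⁻¹)/2)/((E+E⁻¹)/2))^2 := by positivity
    have h3 : (0:ℝ) < 1 + (E*p)^2 := by positivity
    have h4 : (0:ℝ) < E*p + (E*p)⁻¹ := by positivity
    field_simp
    ring
  -- Bäcklund equation 2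
  · intro x
    have harg : HasDerivAt (fun y : ℝ => γ*(y+x₁+x₂)) γ x := by
      simpa using (((hasDerivAt_id x).add_const x₁).add_const x₂).const_mul γ
    have hexp : HasDerivAt (fun y : ℝ => Real.exp (γ*(y+x₁+x₂)))
        (Real.exp (γ*(x+x₁+x₂)) * γ) x := (Real.hasDerivAt_exp _).comp x harg
    have hQarc : HasDerivAt (fun y : ℝ => 4 * Real.arctan (Real.exp (γ*(y+x₁+x₂))))
        (4 * (1/(1+(Real.exp (γ*(x+x₁+x₂)))^2) * (Real.exp (γ*(x+x₁+x₂)) * γ))) x :=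
      ((Real.hasDerivAt_arctan _).comp x hexp).const_mul 4
    have hdQ : deriv Q x
        = 4 * (1/(1+(Real.exp (γ*(x+x₁+x₂)))^2) * (Real.exp (γ*(x+x₁+x₂)) * γ)) := by
      rw [funext hQ]; exact hQarc.deriv
    rw [hdQ, hRt x, hR x, hQ x,
      show ∀ a b : ℝ, (4*a + 4*b)/2 = 2*a + 2*b from fun a b => by ring,
      show ∀ a b : ℝ, (4*a - 4*b)/2 = 2*a - 2*b from fun a b => by ring,
      Real.sin_add, Real.sin_sub, sin_two_arctan', sin_two_arctan',
      cos_two_arctan', cos_two_arctan', one_div a₃, hinv, ha,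
      show γ*(x+x₁+x₂) = γ*x₁ + γ*(x+x₂) from by ring]
    simp only [Real.cosh_eq, Real.sinh_eq, Real.exp_add, Real.exp_neg]
    set E := Real.exp (γ*x₁) with hE
    set p := Real.exp (γ*(x+x₂)) with hp
    have hEpos : 0 < E := Real.exp_pos _
    have hppos : 0 < p := Real.exp_pos _
    have hEne := hEpos.ne'
    have hpne := hppos.ne'
    have h1 : (0:ℝ) < E + E⁻¹ := by positivity
    have h2 : (0:ℝ) < 1 + (β*((p-p⁻¹)/2)/((E+E⁻¹)/2))^2 := by positivity
    have h3 : (0:ℝ) < 1 + (E*p)^2 := by positivity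
    have h5 : (0:ℝ) < ((E+E⁻¹)/2)^2 + β^2 * ((p-p⁻¹)/2)^2 := by positivity
    field_simp
    ring
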